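/- Let p be a prime and n a natural number. If there exists an injective group homomorphism from ℤ/pℤ × ℤ/pℤ into the symmetric group on n letters, then n ≥ 2p. -/
import Mathlib

theorem stmt10 (p n : ℕ) (hp : p.Prime)
    (f : Multiplicative (ZMod p × ZMod p) →* Equiv.Perm (Fin n))
    (hf : Function.Injective f) :
    2 * p ≤ n := by
  haveI : Fact p.Prime := ⟨hp⟩
  have hdvd : Nat.card (Multiplicative (ZMod p × ZMod p)) ∣ Nat.card (Equiv.Perm (Fin n)) :=
    Subgroup.card_dvd_of_injective f hf
  have hcard : Nat.card (Multiplicative (ZMod p × ZMod p)) = p ^ 2 := by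
    simp [Nat.card_eq_fintype_card, Fintype.card_prod, ZMod.card, sq]
  have hperm : Nat.card (Equiv.Perm (Fin n)) = Nat.factorial n := by
    simp [Nat.card_eq_fintype_card, Fintype.card_perm]
  rw [hcard, hperm] at hdvd
  by_contra hlt
  push_neg at hlt
  have hn0 : n ≠ 0 := by
    rintro rfl
    have := Nat.eq_one_of_dvd_one (by simpa using hdvd)
    exact hp.one_lt.ne' (by nlinarith [hp.two_le])
  have hlog : Nat.log p n < 2 := Nat.log_lt_of_lt_pow hn0 (by
    calc n < 2 * p := hlt
    _ ≤ p * p := by nlinarith [hp.two_le]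
    _ = p ^ 2 := (sq p).symm)
  have := (Nat.Prime.pow_dvd_factorial_iff hp hlog).mp hdvd
  simp [Finset.sum_Ico_eq_sum_range] at this
  have : 2 * p ≤ n := (Nat.le_div_iff_mul_le hp.pos).mp this
  omega
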